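/- Let Z1 and Z2 be i.i.d. random vectors in R^d, let γ0 be a d×J1 matrix and δ0 a d×J2 matrix, and let Π0 : R^d → R^m be a function such that for every pair z1, z2 in the support of Z with δ0ᵀz1 = δ0ᵀz2, one has Π0(z1) = Π0(z2) if and only if γ0ᵀz1 = γ0ᵀz2. Define Σ0 = E[(Z1−Z2)(Z1−Z2)ᵀ | Π0(Z1)=Π0(Z2), δ0ᵀZ1=δ0ᵀZ2]. Then Σ0 = E[(Z1−Z2)(Z1−Z2)ᵀ | [γ0,δ0]ᵀ(Z1−Z2)=0] and Σ0 γ0 = 0. -/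

import Mathlib

open MeasureTheory ProbabilityTheory Matrix

lemma supp_null_aux {α : Type*} [TopologicalSpace α] [SecondCountableTopology α]
    [MeasurableSpace α] [OpensMeasurableSpace α] (ν : Measure α) :
    ∃ W : Set α, IsOpen W ∧ ν W = 0 ∧ {z | ¬ ∀ U ∈ nhds z, 0 < ν U} ⊆ W := by
  obtain ⟨T, hTc, hTsub, hTU⟩ := TopologicalSpace.isOpen_sUnion_countable
    {U | IsOpen U ∧ ν U = 0} (fun U hU => hU.1)
  refine ⟨⋃₀ {U | IsOpen U ∧ ν U = 0}, isOpen_sUnion (fun U hU => hU.1), ?_, ?_⟩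
  · rw [← hTU]
    exact (measure_sUnion_null_iff hTc).2 fun U hU => (hTsub hU).2
  · intro z hz
    simp only [Set.mem_setOf_eq, not_forall] at hz
    obtain ⟨U, hU, hpos⟩ := hz
    have hν : ν U = 0 := by
      by_contra h
      exact hpos (pos_iff_ne_zero.mpr h)
    obtain ⟨V, hVU, hVo, hzV⟩ := mem_nhds_iff.1 hU
    exact ⟨V, ⟨hVo, measure_mono_null hVU hν⟩, hzV⟩

lemma tmem_aux {d J1 J2 : ℕ} (γ0 : Matrix (Fin d) (Fin J1) ℝ)
    (δ0 : Matrix (Fin d) (Fin J2) ℝ) (v w : Fin d → ℝ) :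
    (Matrix.fromCols γ0 δ0)ᵀ.mulVec (v - w) = 0 ↔
      (γ0ᵀ.mulVec v = γ0ᵀ.mulVec w ∧ δ0ᵀ.mulVec v = δ0ᵀ.mulVec w) := by
  rw [Matrix.transpose_fromCols, Matrix.fromRows_mulVec, Matrix.mulVec_sub,
    Matrix.mulVec_sub]
  constructor
  · intro h
    refine ⟨sub_eq_zero.1 ?_, sub_eq_zero.1 ?_⟩
    · ext j; simpa using congrFun h (Sum.inl j)
    · ext j; simpa using congrFun h (Sum.inr j)
  · rintro ⟨h1, h2⟩
    funext c
    rcases c with j | j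
    · simpa [sub_eq_zero] using congrFun h1 j
    · simpa [sub_eq_zero] using congrFun h2 j

/-- Index invertibility implies the two characterizations of the constraint
matrix `Sigma0` and the equality constraint `Sigma0 * γ0 = 0`. -/
theorem stmt_0 {Ω : Type*} [MeasurableSpace Ω] (μ : Measure Ω) [IsProbabilityMeasure μ]
    {d J1 J2 m : ℕ}
    (Z1 Z2 : Ω → Fin d → ℝ) (hZ1 : Measurable Z1) (hZ2 : Measurable Z2)
    (hindep : IndepFun Z1 Z2 μ) (hid : μ.map Z1 = μ.map Z2)
    (γ0 : Matrix (Fin d) (Fin J1) ℝ) (δ0 : Matrix (Fin d) (Fin J2) ℝ)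
    (Pi0 : (Fin d → ℝ) → (Fin m → ℝ))
    -- index invertibility on the support of the (common) distribution of Z
    (hinv : ∀ z1 z2 : Fin d → ℝ,
      (∀ U ∈ nhds z1, 0 < μ.map Z1 U) → (∀ U ∈ nhds z2, 0 < μ.map Z1 U) →
      δ0ᵀ.mulVec z1 = δ0ᵀ.mulVec z2 →
      (Pi0 z1 = Pi0 z2 ↔ γ0ᵀ.mulVec z1 = γ0ᵀ.mulVec z2))
    (s t : Set Ω)
    (hs : s = {ω | Pi0 (Z1 ω) = Pi0 (Z2 ω) ∧ δ0ᵀ.mulVec (Z1 ω) = δ0ᵀ.mulVec (Z2 ω)})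
    (ht : t = {ω | (Matrix.fromCols γ0 δ0)ᵀ.mulVec (Z1 ω - Z2 ω) = 0})
    (hspos : μ s ≠ 0)
    (Sigma0 : Matrix (Fin d) (Fin d) ℝ)
    (hSigma0 : ∀ i j, Sigma0 i j = ∫ ω, (Z1 ω i - Z2 ω i) * (Z1 ω j - Z2 ω j) ∂(μ[|s]))
    (hint : ∀ i j, Integrable (fun ω => (Z1 ω i - Z2 ω i) * (Z1 ω j - Z2 ω j)) (μ[|s])) :
    (∀ i j, Sigma0 i j = ∫ ω, (Z1 ω i - Z2 ω i) * (Z1 ω j - Z2 ω j) ∂(μ[|t])) ∧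
      Sigma0 * γ0 = 0 := by
  obtain ⟨W, hWo, hWν, hWsub⟩ := supp_null_aux (μ.map Z1)
  have hWmeas : MeasurableSet W := hWo.measurableSet
  have h1 : μ (Z1 ⁻¹' W) = 0 := by rw [← Measure.map_apply hZ1 hWmeas]; exact hWν
  have h2 : μ (Z2 ⁻¹' W) = 0 := by rw [← Measure.map_apply hZ2 hWmeas, ← hid]; exact hWν
  have e1 : ∀ᵐ ω ∂μ, ∀ U ∈ nhds (Z1 ω), 0 < μ.map Z1 U := by
    rw [ae_iff]
    exact measure_mono_null (fun ω hω => hWsub hω) h1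
  have e2 : ∀ᵐ ω ∂μ, ∀ U ∈ nhds (Z2 ω), 0 < μ.map Z1 U := by
    rw [ae_iff]
    exact measure_mono_null (fun ω hω => hWsub hω) h2
  have hae : ∀ᵐ ω ∂μ, (ω ∈ s ↔ ω ∈ t) := by
    filter_upwards [e1, e2] with ω hω1 hω2
    subst hs ht
    simp only [Set.mem_setOf_eq, tmem_aux]
    constructor
    · rintro ⟨hp, hd⟩
      exact ⟨(hinv _ _ hω1 hω2 hd).1 hp, hd⟩
    · rintro ⟨hg, hd⟩
      exact ⟨(hinv _ _ hω1 hω2 hd).2 hg, hd⟩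
  have hst : s =ᵐ[μ] t := Filter.eventuallyEq_set.2 hae
  have hcond : μ[|s] = μ[|t] := by
    rw [ProbabilityTheory.cond, ProbabilityTheory.cond, measure_congr hst,
      Measure.restrict_congr_set hst]
  -- measurability of t
  have hfmeas : Measurable (fun ω => (Matrix.fromCols γ0 δ0)ᵀ.mulVec (Z1 ω - Z2 ω)) := by
    apply measurable_pi_lambda
    intro c
    simp only [Matrix.mulVec, dotProduct]
    apply Finset.measurable_sum
    intro k _
    exact measurable_const.mul (((measurable_pi_apply k).comp hZ1).sub
      ((measurable_pi_apply k).comp hZ2))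
  have htmeas : MeasurableSet t := by
    rw [ht]
    exact hfmeas (measurableSet_singleton 0)
  have htae : ∀ᵐ ω ∂(μ[|t]), ω ∈ t := by
    rw [ProbabilityTheory.cond]
    exact Measure.ae_smul_measure (ae_restrict_mem htmeas) _
  constructor
  · intro i j
    rw [hSigma0, hcond]
  · ext i j
    rw [Matrix.mul_apply, Matrix.zero_apply]
    have hterm : ∀ k, Sigma0 i k * γ0 k j
        = ∫ ω, ((Z1 ω i - Z2 ω i) * (Z1 ω k - Z2 ω k)) * γ0 k j ∂(μ[|s]) := by
      intro k
      rw [hSigma0, ← integral_mul_const]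
    calc ∑ k, Sigma0 i k * γ0 k j
        = ∑ k, ∫ ω, ((Z1 ω i - Z2 ω i) * (Z1 ω k - Z2 ω k)) * γ0 k j ∂(μ[|s]) := by
          exact Finset.sum_congr rfl fun k _ => hterm k
      _ = ∫ ω, ∑ k, ((Z1 ω i - Z2 ω i) * (Z1 ω k - Z2 ω k)) * γ0 k j ∂(μ[|s]) := by
          exact (integral_finset_sum _ fun k _ => (hint i k).mul_const _).symm
      _ = 0 := by
          rw [hcond]
          apply integral_eq_zero_of_ae
          filter_upwards [htae] with ω hω
          have hmem : (Matrix.fromCols γ0 δ0)ᵀ.mulVec (Z1 ω - Z2 ω) = 0 := by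
            rw [ht] at hω; exact hω
          have hz : ∑ k, γ0 k j * (Z1 ω k - Z2 ω k) = 0 := by
            rw [Matrix.transpose_fromCols, Matrix.fromRows_mulVec] at hmem
            have := congrFun hmem (Sum.inl j)
            simpa [Matrix.mulVec, dotProduct] using this
          calc ∑ k, ((Z1 ω i - Z2 ω i) * (Z1 ω k - Z2 ω k)) * γ0 k j
              = (Z1 ω i - Z2 ω i) * ∑ k, γ0 k j * (Z1 ω k - Z2 ω k) := by
                rw [Finset.mul_sum]
                exact Finset.sum_congr rfl fun k _ => by ring
            _ = 0 := by rw [hz, mul_zero]
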